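/- Let n ≥ 1 and let I ⊆ {1,…,n} be nonempty. Then ξ_I + δ_I(n)H_n is the unique I-canonical element for the integer lattice ℤ^n of Sp(n). Moreover its coordinates are a_j = |I ∩ {j,…,n}|, so that for every 1 ≤ k ≤ n the uniton number r_{ρ_k}(ξ_I + δ_I(n)H_n) = 2(a_1+⋯+a_k) equals 2|I| + 2|I∩{2,…,n}| + ⋯ + 2|I∩{k,…,n}|. -/

import Mathlib

/-- The duals of the simple roots of `sp(n)` (1-based index):
`H_i = E_1+⋯+E_i` for `i ≤ n-1` and `H_n = (E_1+⋯+E_n)/2`. -/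
noncomputable def Hsp (n i : ℕ) : Fin n → ℝ :=
  if i = n then fun _ => 1 / 2 else fun j => if (j : ℕ) + 1 ≤ i then 1 else 0

/-- The integer lattice `ℤ^n` inside `ℝ^n`. -/
def IntLat (n : ℕ) : Set (Fin n → ℝ) := {v | ∀ j, ∃ m : ℤ, v j = m}

/-- The set of `I`-canonical elements for a lattice `𝔏 ⊆ ℝ^n`. -/
def ICanonSet (n : ℕ) (𝔏 : Set (Fin n → ℝ)) (H : ℕ → Fin n → ℝ) (I : Finset ℕ) :
    Set (Fin n → ℝ) :=
  {ξ | ∃ c : ℕ → ℕ, (∀ i ∈ I, 1 ≤ c i) ∧ ξ = ∑ i ∈ I, c i • H i ∧ ξ ∈ 𝔏 ∧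
    ∀ c' : ℕ → ℕ, (∀ i ∈ I, 1 ≤ c' i ∧ c' i ≤ c i) →
      (∑ i ∈ I, c' i • H i) ∈ 𝔏 → (∑ i ∈ I, c' i • H i) = ξ}

/-- Sum of the first `k` (1-based) coordinates of `v`. -/
def partialSum (n : ℕ) (v : Fin n → ℝ) (k : ℕ) : ℝ :=
  ∑ j ∈ Finset.univ.filter (fun j : Fin n => (j : ℕ) + 1 ≤ k), v j

/-- `δ_I(m)`. -/
def deltaI (I : Finset ℕ) (m : ℕ) : ℕ := if m ∈ I then 1 else 0


lemma coordSp (n : ℕ) (I : Finset ℕ) (c : ℕ → ℕ) (j : Fin n) :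
    (∑ i ∈ I, c i • Hsp n i) j =
      (∑ i ∈ I.erase n, if (j : ℕ) + 1 ≤ i then (c i : ℝ) else 0) +
      (if n ∈ I then (c n : ℝ) / 2 else 0) := by
  rw [Finset.sum_apply]
  by_cases hn : n ∈ I
  · rw [← Finset.sum_erase_add _ _ hn]
    simp only [hn, if_true]
    congr 1
    · refine Finset.sum_congr rfl fun i hi => ?_
      have hne : i ≠ n := Finset.ne_of_mem_erase hi
      simp [Hsp, hne, Pi.smul_apply, nsmul_eq_mul, mul_ite]
    · simp [Hsp, Pi.smul_apply, nsmul_eq_mul]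
      ring
  · simp only [hn, if_false, add_zero, Finset.erase_eq_of_notMem hn]
    refine Finset.sum_congr rfl fun i hi => ?_
    have hne : i ≠ n := fun h => hn (h ▸ hi)
    simp [Hsp, hne, Pi.smul_apply, nsmul_eq_mul, mul_ite]

lemma eraseSumInt (n : ℕ) (I : Finset ℕ) (c : ℕ → ℕ) (j : Fin n) :
    ∃ m : ℤ, (∑ i ∈ I.erase n, if (j : ℕ) + 1 ≤ i then (c i : ℝ) else 0) = m := by
  refine ⟨∑ i ∈ (I.erase n).filter (fun i => (j : ℕ) + 1 ≤ i), (c i : ℤ), ?_⟩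
  rw [Finset.sum_filter]
  push_cast
  rfl

lemma memIntLat (n : ℕ) (I : Finset ℕ) (c : ℕ → ℕ) (h : n ∈ I → 2 ∣ c n) :
    (∑ i ∈ I, c i • Hsp n i) ∈ IntLat n := by
  intro j
  obtain ⟨m, hm⟩ := eraseSumInt n I c j
  rw [coordSp, hm]
  by_cases hn : n ∈ I
  · obtain ⟨k, hk⟩ := h hn
    refine ⟨m + k, ?_⟩
    simp only [hn, if_true, hk]
    push_cast
    ring
  · exact ⟨m, by simp [hn]⟩

lemma evenOfIntLat (n : ℕ) (hn : 1 ≤ n) (I : Finset ℕ) (hI : I ⊆ Finset.Icc 1 n)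
    (c : ℕ → ℕ) (hmem : (∑ i ∈ I, c i • Hsp n i) ∈ IntLat n) (hnI : n ∈ I) :
    2 ∣ c n := by
  set j0 : Fin n := ⟨n - 1, by omega⟩ with hj0
  obtain ⟨m, hm⟩ := hmem j0
  rw [coordSp] at hm
  have hz : (∑ i ∈ I.erase n, if (j0 : ℕ) + 1 ≤ i then (c i : ℝ) else 0) = 0 := by
    refine Finset.sum_eq_zero fun i hi => ?_
    have hin : i ∈ I := Finset.mem_of_mem_erase hi
    have hne : i ≠ n := Finset.ne_of_mem_erase hi
    have := Finset.mem_Icc.mp (hI hin)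
    have : ¬ ((j0 : ℕ) + 1 ≤ i) := by simp [hj0]; omega
    simp [this]
  rw [hz, zero_add, if_pos hnI] at hm
  have h2 : (c n : ℝ) = 2 * m := by linarith
  have h2' : (c n : ℤ) = 2 * m := by exact_mod_cast h2
  have : (2 : ℤ) ∣ (c n : ℤ) := ⟨m, h2'⟩
  exact_mod_cast this

/-- canonical coefficients -/
def c0 (n : ℕ) : ℕ → ℕ := fun i => if i = n then 2 else 1

lemma c0_sum (n : ℕ) (I : Finset ℕ) :
    (∑ i ∈ I, c0 n i • Hsp n i) = (∑ i ∈ I, Hsp n i) + deltaI I n • Hsp n n := by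
  by_cases hn : n ∈ I
  · rw [← Finset.sum_erase_add _ _ hn, ← Finset.sum_erase_add _ (fun i => Hsp n i) hn]
    have h1 : (∑ i ∈ I.erase n, c0 n i • Hsp n i) = ∑ i ∈ I.erase n, Hsp n i := by
      refine Finset.sum_congr rfl fun i hi => ?_
      have : i ≠ n := Finset.ne_of_mem_erase hi
      simp [c0, this]
    rw [h1]
    simp only [deltaI, hn, if_true, c0, if_pos rfl]
    rw [two_smul, one_smul]
    abel
  · simp only [deltaI, hn, if_false, zero_smul, add_zero]
    refine Finset.sum_congr rfl fun i hi => ?_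
    have : i ≠ n := fun h => hn (h ▸ hi)
    simp [c0, this]

lemma coordFormula (n : ℕ) (hn : 1 ≤ n) (I : Finset ℕ) (hI : I ⊆ Finset.Icc 1 n) (j : Fin n) :
    ((∑ i ∈ I, Hsp n i) + deltaI I n • Hsp n n) j =
      ((I.filter fun i => (j : ℕ) + 1 ≤ i).card : ℝ) := by
  rw [← c0_sum, coordSp]
  have hj : (j : ℕ) + 1 ≤ n := j.2
  by_cases hnI : n ∈ I
  · have hfil : I.filter (fun i => (j : ℕ) + 1 ≤ i) =
        insert n ((I.erase n).filter (fun i => (j : ℕ) + 1 ≤ i)) := by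
      ext i
      simp only [Finset.mem_filter, Finset.mem_insert, Finset.mem_erase]
      constructor
      · rintro ⟨hiI, hle⟩
        by_cases h : i = n
        · exact Or.inl h
        · exact Or.inr ⟨⟨h, hiI⟩, hle⟩
      · rintro (rfl | ⟨⟨_, hiI⟩, hle⟩)
        · exact ⟨hnI, hj⟩
        · exact ⟨hiI, hle⟩
    rw [hfil, Finset.card_insert_of_notMem (by simp)]
    have : (∑ i ∈ I.erase n, if (j : ℕ) + 1 ≤ i then (c0 n i : ℝ) else 0) =
        (((I.erase n).filter (fun i => (j : ℕ) + 1 ≤ i)).card : ℝ) := by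
      rw [Finset.card_eq_sum_ones, Finset.sum_filter]
      push_cast
      refine Finset.sum_congr rfl fun i hi => ?_
      have : i ≠ n := Finset.ne_of_mem_erase hi
      simp [c0, this]
    rw [this]
    simp only [hnI, if_true, c0, if_pos rfl]
    push_cast
    ring
  · simp only [hnI, if_false, add_zero, Finset.erase_eq_of_notMem hnI]
    rw [Finset.card_eq_sum_ones, Finset.sum_filter]
    push_cast
    refine Finset.sum_congr rfl fun i hi => ?_
    have : i ≠ n := fun h => hnI (h ▸ hi)
    simp [c0, this]

lemma partialSumFormula (n : ℕ) (hn : 1 ≤ n) (I : Finset ℕ) (hI : I ⊆ Finset.Icc 1 n)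
    (k : ℕ) (hk1 : 1 ≤ k) (hkn : k ≤ n) :
    partialSum n ((∑ i ∈ I, Hsp n i) + deltaI I n • Hsp n n) k =
      ∑ t ∈ Finset.Icc 1 k, ((I.filter fun i => t ≤ i).card : ℝ) := by
  unfold partialSum
  have h1 : ∀ j ∈ Finset.univ.filter (fun j : Fin n => (j : ℕ) + 1 ≤ k),
      ((∑ i ∈ I, Hsp n i) + deltaI I n • Hsp n n) j =
      ((I.filter fun i => (j : ℕ) + 1 ≤ i).card : ℝ) :=
    fun j _ => coordFormula n hn I hI j
  rw [Finset.sum_congr rfl h1]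
  set f : ℕ → ℝ := fun t => ((I.filter fun i => t ≤ i).card : ℝ) with hf
  have h2 : (∑ j ∈ Finset.univ.filter (fun j : Fin n => (j : ℕ) + 1 ≤ k),
      f ((j : ℕ) + 1)) = ∑ j ∈ (Finset.range n).filter (fun j => j + 1 ≤ k), f (j + 1) := by
    rw [Finset.sum_filter, Finset.sum_filter,
      Fin.sum_univ_eq_sum_range (fun j => if j + 1 ≤ k then f (j + 1) else 0)]
  rw [h2]
  have h3 : (Finset.range n).filter (fun j => j + 1 ≤ k) = Finset.range k := by
    ext j; simp [Finset.mem_range]; omega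
  rw [h3]
  have h4 : (Finset.Icc 1 k) = (Finset.range k).image (· + 1) := by
    ext t
    simp only [Finset.mem_Icc, Finset.mem_image, Finset.mem_range]
    constructor
    · rintro ⟨ht1, ht2⟩; exact ⟨t - 1, by omega, by omega⟩
    · rintro ⟨a, ha, rfl⟩; omega
  rw [h4, Finset.sum_image (by intro a _ b _ h; simp only at h; omega)]

/-- `ξ_I + δ_I(n) H_n` is the unique `I`-canonical element of `Sp(n)`;
its coordinates are `a_j = |I ∩ {j,…,n}|` and, for `1 ≤ k ≤ n`, its uniton number for
`ρ_k` is `2(a_1+⋯+a_k) = 2Σ_{t=1}^k |I∩{t,…,n}|`. -/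
theorem sp_canonical (n : ℕ) (hn : 1 ≤ n) (I : Finset ℕ)
    (hI : I ⊆ Finset.Icc 1 n) (hne : I.Nonempty) :
    ICanonSet n (IntLat n) (Hsp n) I =
      {(∑ i ∈ I, Hsp n i) + deltaI I n • Hsp n n} ∧
    (∀ j : Fin n, ((∑ i ∈ I, Hsp n i) + deltaI I n • Hsp n n) j =
      ((I.filter fun i => (j : ℕ) + 1 ≤ i).card : ℝ)) ∧
    (∀ k : ℕ, 1 ≤ k → k ≤ n →
      2 * partialSum n ((∑ i ∈ I, Hsp n i) + deltaI I n • Hsp n n) k =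
        2 * ∑ t ∈ Finset.Icc 1 k, ((I.filter fun i => t ≤ i).card : ℝ)) := by
  refine ⟨?_, fun j => coordFormula n hn I hI j,
    fun k hk1 hkn => by rw [partialSumFormula n hn I hI k hk1 hkn]⟩
  have hc0lat : (∑ i ∈ I, c0 n i • Hsp n i) ∈ IntLat n :=
    memIntLat n I (c0 n) (fun _ => by simp [c0])
  ext ξ
  simp only [Set.mem_singleton_iff]
  constructor
  · rintro ⟨c, hc1, hξ, hmem, hmin⟩
    have hmem' : (∑ i ∈ I, c i • Hsp n i) ∈ IntLat n := hξ ▸ hmem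
    have hcn : n ∈ I → 2 ≤ c n := fun hnI => by
      have h2 := evenOfIntLat n hn I hI c hmem' hnI
      have h1 := hc1 n hnI
      omega
    have hle : ∀ i ∈ I, 1 ≤ c0 n i ∧ c0 n i ≤ c i := by
      intro i hi
      by_cases h : i = n
      · subst h; exact ⟨by simp [c0], by simpa [c0] using hcn hi⟩
      · exact ⟨by simp [c0, h], by simpa [c0, h] using hc1 i hi⟩
    have := hmin (c0 n) hle hc0lat
    rw [c0_sum] at this
    rw [← this]
  · rintro rfl
    refine ⟨c0 n, fun i _ => by simp [c0]; split <;> omega, (c0_sum n I).symm,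
      (c0_sum n I) ▸ hc0lat, ?_⟩
    intro c' hc' hlat
    have heq : ∀ i ∈ I, c' i = c0 n i := by
      intro i hi
      obtain ⟨h1, h2⟩ := hc' i hi
      by_cases h : i = n
      · have h3 := evenOfIntLat n hn I hI c' hlat (h ▸ hi)
        simp only [c0, if_pos h] at h2 ⊢
        rw [h] at h1 h2 ⊢
        omega
      · simp only [c0, if_neg h] at h2 ⊢
        omega
    rw [Finset.sum_congr rfl (fun i hi => by rw [heq i hi]), c0_sum]
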